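/- Let Λ ∈ GL(d,ℝ), and define q(p₀,…,p_{n−1},Λ) = (Λ⁻¹(p₁−p₀), …, Λ⁻¹(p_{n−1}−p₀), ΛᵀΛ). Then for any Euclidean isometry u(x) = Ux + t with U ∈ O(d,ℝ), q(u(p₀),…,u(p_{n−1}), UΛ) = q(p₀,…,p_{n−1},Λ); conversely, if q(p₀,…,p_{n−1},Λ) = q(p₀',…,p_{n−1}',Λ') then there is an isometry u with u(p_i) = p_i' for all i and UΛ = Λ'. -/

import Mathlib

open Matrix

/-- The quotient map `q(p₀,…,p_{n−1},Λ) = (Λ⁻¹(p₁−p₀), …, Λ⁻¹(p_{n−1}−p₀), ΛᵀΛ)`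
(recorded for all indices `i`; the entry at `i = 0` is `0`). -/
noncomputable def placementInvariant {d n : ℕ} (p : Fin (n + 1) → Fin d → ℝ)
    (Λ : Matrix (Fin d) (Fin d) ℝ) :
    (Fin (n + 1) → Fin d → ℝ) × Matrix (Fin d) (Fin d) ℝ :=
  (fun i => Λ⁻¹.mulVec (p i - p 0), Λᵀ * Λ)

/-- `q` is a complete invariant for the action of the Euclidean group
`E(d)` on placements `(p₀,…,p_{n−1},Λ)`: it is invariant under every isometry
`u(x) = Ux + t`, and two placements with the same invariant differ by an isometry. -/
theorem placementInvariant_complete {d n : ℕ}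
    (p p' : Fin (n + 1) → Fin d → ℝ) (Λ Λ' : Matrix (Fin d) (Fin d) ℝ)
    (hΛ : IsUnit Λ.det) (hΛ' : IsUnit Λ'.det) :
    (∀ U ∈ Matrix.orthogonalGroup (Fin d) ℝ, ∀ t : Fin d → ℝ,
      placementInvariant (fun i => U.mulVec (p i) + t) (U * Λ) =
        placementInvariant p Λ) ∧
    (placementInvariant p Λ = placementInvariant p' Λ' →
      ∃ U ∈ Matrix.orthogonalGroup (Fin d) ℝ, ∃ t : Fin d → ℝ,
        (∀ i, U.mulVec (p i) + t = p' i) ∧ U * Λ = Λ') := by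
  constructor
  · intro U hU t
    have hU1 : U * Uᵀ = 1 := by simpa [Matrix.star_eq_conjTranspose, Matrix.conjTranspose_eq_transpose_of_trivial] using hU.2
    have hU2 : Uᵀ * U = 1 := by simpa [Matrix.star_eq_conjTranspose, Matrix.conjTranspose_eq_transpose_of_trivial] using hU.1
    have hUdet : IsUnit U.det := by
      apply IsUnit.of_mul_eq_one (a := U.det) Uᵀ.det
      rw [← Matrix.det_mul, hU1, Matrix.det_one]
    have hUinv : U⁻¹ = Uᵀ := Matrix.inv_eq_right_inv hU1
    unfold placementInvariant
    simp only [Prod.mk.injEq]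
    constructor
    · funext i
      have : (fun i => U.mulVec (p i) + t) i - (fun i => U.mulVec (p i) + t) 0
          = U.mulVec (p i - p 0) := by
        simp [Matrix.mulVec_sub]
      rw [this, Matrix.mul_inv_rev, hUinv, Matrix.mulVec_mulVec,
        Matrix.mul_assoc, hU2, Matrix.mul_one]
    · rw [Matrix.transpose_mul, Matrix.mul_assoc, ← Matrix.mul_assoc Uᵀ, hU2,
        Matrix.one_mul]
  · intro h
    simp only [placementInvariant, Prod.mk.injEq] at h
    obtain ⟨h1, h2⟩ := h
    set U := Λ' * Λ⁻¹ with hUdef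
    have hΛΛ : Λ * Λ⁻¹ = 1 := Matrix.mul_nonsing_inv Λ hΛ
    have hΛΛ2 : Λ⁻¹ * Λ = 1 := Matrix.nonsing_inv_mul Λ hΛ
    have hΛΛ' : Λ' * Λ'⁻¹ = 1 := Matrix.mul_nonsing_inv Λ' hΛ'
    have hΛΛ'2 : Λ'⁻¹ * Λ' = 1 := Matrix.nonsing_inv_mul Λ' hΛ'
    have key : Uᵀ * U = 1 := by
      rw [hUdef, Matrix.transpose_mul]
      calc Λ⁻¹ᵀ * Λ'ᵀ * (Λ' * Λ⁻¹) = Λ⁻¹ᵀ * (Λ'ᵀ * Λ') * Λ⁻¹ := by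
            simp only [Matrix.mul_assoc]
        _ = Λ⁻¹ᵀ * (Λᵀ * Λ) * Λ⁻¹ := by rw [h2]
        _ = (Λ * Λ⁻¹)ᵀ * (Λ * Λ⁻¹) := by
            simp only [Matrix.transpose_mul, Matrix.mul_assoc]
        _ = 1 := by rw [hΛΛ]; simp
    have key2 : U * Uᵀ = 1 := by rwa [mul_eq_one_comm] at key
    have hUorth : U ∈ Matrix.orthogonalGroup (Fin d) ℝ :=
      ⟨by simpa [Matrix.star_eq_conjTranspose, Matrix.conjTranspose_eq_transpose_of_trivial] using key, by simpa [Matrix.star_eq_conjTranspose, Matrix.conjTranspose_eq_transpose_of_trivial] using key2⟩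
    refine ⟨U, hUorth, p' 0 - U.mulVec (p 0), fun i => ?_, ?_⟩
    · have hi := congrFun h1 i
      have hU : U.mulVec (p i - p 0) = p' i - p' 0 := by
        rw [hUdef, ← Matrix.mulVec_mulVec, hi, Matrix.mulVec_mulVec, hΛΛ',
          Matrix.one_mulVec]
      have := hU
      rw [Matrix.mulVec_sub] at this
      have : U.mulVec (p i) = p' i - p' 0 + U.mulVec (p 0) := by
        rw [← this]; abel
      rw [this]; abel
    · rw [hUdef, Matrix.mul_assoc, hΛΛ2, Matrix.mul_one]
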